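/- Let q = (q₁,q₂,q₃,q₄) ∈ ℝ⁴ be the coefficient vector of a binary cubic with positive discriminant, i.e. Δ₃(q) = q₂²q₃² − 4q₁q₃³ − 4q₂³q₄ + 18q₁q₂q₃q₄ − 27q₁²q₄² > 0. Then there exist x,y,z,w ∈ ℝ with xw − yz ≠ 0 such that Q(x,y,z,w) = q, where Q(x,y,z,w) is the binary cubic (1/3)(xu₁+yu₂)³ − (xu₁+yu₂)(zu₁+wu₂)², i.e. (q₁,q₂,q₃,q₄) = (x³/3 − xz², x²y − 2xzw − yz², xy² − xw² − 2yzw, y³/3 − yw²). -/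

import Mathlib

noncomputable section

private lemma cube_root_exists (v : ℝ) : ∃ l : ℝ, l ^ 3 = v := by
  have h : ∀ u : ℝ, 0 ≤ u → ∃ l : ℝ, l ^ 3 = u := by
    intro u hu
    refine ⟨u ^ ((1:ℝ)/3), ?_⟩
    rw [← Real.rpow_natCast (u ^ ((1:ℝ)/3)) 3, ← Real.rpow_mul hu]
    norm_num
  rcases le_total 0 v with hv | hv
  · exact h v hv
  · obtain ⟨l, hl⟩ := h (-v) (by linarith)
    exact ⟨-l, by rw [Odd.neg_pow (by decide : Odd 3), hl, neg_neg]⟩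


private lemma cubic_big (b c d M : ℝ) (h1 : |b| + 1 ≤ M) (h2 : |c| + 1 ≤ M)
    (h3 : |d| + 1 ≤ M) (hM : 1 ≤ M) :
    0 < M^3 + b*M^2 + c*M + d ∧ (-M)^3 + b*(-M)^2 + c*(-M) + d < 0 := by
  have hb := le_abs_self b
  have hb' := neg_abs_le b
  have hc := le_abs_self c
  have hc' := neg_abs_le c
  have hd := le_abs_self d
  have hd' := neg_abs_le d
  have hM0 : (0:ℝ) ≤ M := by linarith
  have e1 : -(M-1)*M^2 ≤ b*M^2 :=
    mul_le_mul_of_nonneg_right (by linarith) (sq_nonneg M)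
  have e1' : b*M^2 ≤ (M-1)*M^2 :=
    mul_le_mul_of_nonneg_right (by linarith) (sq_nonneg M)
  have e2 : -(M-1)*M ≤ c*M := mul_le_mul_of_nonneg_right (by linarith) hM0
  have e2' : c*M ≤ (M-1)*M := mul_le_mul_of_nonneg_right (by linarith) hM0
  constructor
  · nlinarith [e1, e2]
  · nlinarith [e1', e2']


private lemma sqrt_bound (b c M : ℝ) (hMb : |b| + 1 ≤ M) (hMc : |c| + 1 ≤ M)
    (hM1 : 1 ≤ M) : b^2 - 3*c < (3*M - b)^2 ∧ b^2 - 3*c < (3*M + b)^2 := by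
  have hb := le_abs_self b
  have hb2 := neg_abs_le b
  have hc2 := neg_abs_le c
  have hM0 : (0:ℝ) ≤ M := by linarith
  have hmb1 : M*b ≤ M*(M-1) := mul_le_mul_of_nonneg_left (by linarith) hM0
  have hmb2 : M*(-(M-1)) ≤ M*b := mul_le_mul_of_nonneg_left (by linarith) hM0
  constructor
  · nlinarith [hmb2, sq_nonneg M]
  · nlinarith [hmb1, sq_nonneg M]

private lemma cubic_roots (b c d : ℝ)
    (h : 0 < b^2*c^2 - 4*c^3 - 4*b^3*d + 18*b*c*d - 27*d^2) :
    ∃ r₁ r₂ r₃ : ℝ, r₁ < r₂ ∧ r₂ < r₃ ∧ b = -(r₁+r₂+r₃) ∧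
      c = r₁*r₂+r₁*r₃+r₂*r₃ ∧ d = -(r₁*r₂*r₃) := by
  set p : ℝ → ℝ := fun t => t^3 + b*t^2 + c*t + d with hp
  have hcont : Continuous p := by fun_prop
  have hP3 : 0 < (b^2 - 3*c)^3 := by nlinarith [sq_nonneg (2*b^3 - 9*b*c + 27*d)]
  have hP : 0 < b^2 - 3*c := by
    by_contra h'
    push_neg at h'
    nlinarith [sq_nonneg (b^2 - 3*c)]
  set s := Real.sqrt (b^2 - 3*c) with hsdef
  have hs2 : s^2 = b^2 - 3*c := Real.sq_sqrt hP.le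
  have hs0 : 0 < s := Real.sqrt_pos.mpr hP
  set t₁ := (-b - s)/3 with ht₁
  set t₂ := (-b + s)/3 with ht₂
  have ht12 : t₁ < t₂ := by rw [ht₁, ht₂]; linarith
  have hv1 : p t₁ = (2*b^3 - 9*b*c + 27*d + 2*s^3)/27 := by
    rw [hp, ht₁]; field_simp; linear_combination (-(81:ℝ)*s) * hs2
  have hv2 : p t₂ = (2*b^3 - 9*b*c + 27*d - 2*s^3)/27 := by
    rw [hp, ht₂]; field_simp; linear_combination ((81:ℝ)*s) * hs2
  have hs6 : s^6 = (b^2 - 3*c)^3 := by rw [← hs2]; ring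
  have hs3 : 0 < s^3 := by positivity
  have hprod : p t₁ * p t₂ < 0 := by
    rw [hv1, hv2, div_mul_div_comm]
    apply div_neg_of_neg_of_pos _ (by norm_num)
    nlinarith [hs6, h]
  have hgt : p t₂ < p t₁ := by rw [hv1, hv2]; have := hs3; linarith
  have h2neg : p t₂ < 0 := by
    by_contra h'; push_neg at h'; nlinarith [hprod, hgt]
  have h1pos : 0 < p t₁ := by
    by_contra h'; push_neg at h'; nlinarith [hprod, hgt]
  set M := |b| + |c| + |d| + 1 with hM
  have hbb := le_abs_self b
  have hbb' := neg_abs_le b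
  have hcc := le_abs_self c
  have hcc' := neg_abs_le c
  have hdd := le_abs_self d
  have hdd' := neg_abs_le d
  have hMb : |b| + 1 ≤ M := by rw [hM]; linarith [abs_nonneg c, abs_nonneg d]
  have hMc : |c| + 1 ≤ M := by rw [hM]; linarith [abs_nonneg b, abs_nonneg d]
  have hMd : |d| + 1 ≤ M := by rw [hM]; linarith [abs_nonneg b, abs_nonneg c]
  have hM1 : 1 ≤ M := by rw [hM]; linarith [abs_nonneg b, abs_nonneg c, abs_nonneg d]
  have hM0 : 0 < M := by linarith
  obtain ⟨hpM', hpmM'⟩ := cubic_big b c d M hMb hMc hMd hM1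
  have hpM : 0 < p M := by rw [hp]; exact hpM'
  have hpmM : p (-M) < 0 := by rw [hp]; exact hpmM'
  have habs1 := le_abs_self b
  have habs2 := neg_abs_le b
  have hslt1 : s < 3*M - b := by
    rw [hsdef]
    exact (Real.sqrt_lt' (by linarith)).mpr (sqrt_bound b c M hMb hMc hM1).1
  have hslt2 : s < 3*M + b := by
    rw [hsdef]
    exact (Real.sqrt_lt' (by linarith)).mpr (sqrt_bound b c M hMb hMc hM1).2
  have ht1M : -M < t₁ := by rw [ht₁]; linarith
  have ht2M : t₂ < M := by rw [ht₂]; linarith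
  -- three roots by IVT
  obtain ⟨r₁, hr₁mem, hr₁⟩ := intermediate_value_Icc (by linarith : -M ≤ t₁)
    hcont.continuousOn ⟨hpmM.le, h1pos.le⟩
  obtain ⟨r₂, hr₂mem, hr₂⟩ := intermediate_value_Icc' (by linarith : t₁ ≤ t₂)
    hcont.continuousOn ⟨h2neg.le, h1pos.le⟩
  obtain ⟨r₃, hr₃mem, hr₃⟩ := intermediate_value_Icc (by linarith : t₂ ≤ M)
    hcont.continuousOn ⟨h2neg.le, hpM.le⟩
  have hr12 : r₁ < r₂ := by
    rcases lt_or_eq_of_le hr₁mem.2 with h' | h'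
    · exact lt_of_lt_of_le h' hr₂mem.1
    · exfalso; rw [h'] at hr₁; rw [hr₁] at h1pos; exact lt_irrefl 0 h1pos
  have hr23 : r₂ < r₃ := by
    rcases lt_or_eq_of_le hr₂mem.2 with h' | h'
    · exact lt_of_lt_of_le h' hr₃mem.1
    · exfalso; rw [h'] at hr₂; rw [hr₂] at h2neg; exact lt_irrefl 0 h2neg
  -- Vieta
  simp only [hp] at hr₁ hr₂ hr₃
  have hne12 : r₁ - r₂ ≠ 0 := sub_ne_zero.mpr hr12.ne
  have hne13 : r₁ - r₃ ≠ 0 := sub_ne_zero.mpr (hr12.trans hr23).ne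
  have hne23 : r₂ - r₃ ≠ 0 := sub_ne_zero.mpr hr23.ne
  have e12 : r₁^2 + r₁*r₂ + r₂^2 + b*(r₁+r₂) + c = 0 := by
    have h' : (r₁ - r₂) * (r₁^2 + r₁*r₂ + r₂^2 + b*(r₁+r₂) + c) = 0 := by
      linear_combination hr₁ - hr₂
    exact (mul_eq_zero.mp h').resolve_left hne12
  have e13 : r₁^2 + r₁*r₃ + r₃^2 + b*(r₁+r₃) + c = 0 := by
    have h' : (r₁ - r₃) * (r₁^2 + r₁*r₃ + r₃^2 + b*(r₁+r₃) + c) = 0 := by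
      linear_combination hr₁ - hr₃
    exact (mul_eq_zero.mp h').resolve_left hne13
  have hb : b = -(r₁+r₂+r₃) := by
    have h' : (r₂ - r₃) * (b + (r₁+r₂+r₃)) = 0 := by linear_combination e12 - e13
    have := (mul_eq_zero.mp h').resolve_left hne23
    linarith
  have hc : c = r₁*r₂+r₁*r₃+r₂*r₃ := by linear_combination e12 - (r₁+r₂)*hb
  refine ⟨r₁, r₂, r₃, hr12, hr23, hb, hc, ?_⟩
  linear_combination hr₁ - r₁^2*hb - r₁*hc

/-- The discriminant of a binary cubic `q 0 • u₁³ + q 1 • u₁²u₂ + q 2 • u₁u₂² + q 3 • u₂³`. -/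
def disc3 (q : Fin 4 → ℝ) : ℝ :=
  q 1 ^ 2 * q 2 ^ 2 - 4 * q 0 * q 2 ^ 3 - 4 * q 1 ^ 3 * q 3 +
    18 * q 0 * q 1 * q 2 * q 3 - 27 * q 0 ^ 2 * q 3 ^ 2

/-- The coefficient vector of the binary cubic
`Q(x,y,z,w) = (1/3)(x u₁ + y u₂)³ − (x u₁ + y u₂)(z u₁ + w u₂)²`. -/
def Qcoeff (x y z w : ℝ) : Fin 4 → ℝ :=
  ![x ^ 3 / 3 - x * z ^ 2, x ^ 2 * y - 2 * x * z * w - y * z ^ 2,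
    x * y ^ 2 - x * w ^ 2 - 2 * y * z * w, y ^ 3 / 3 - y * w ^ 2]

private lemma main_pos (q : Fin 4 → ℝ) (hq0 : q 0 ≠ 0) (hq : 0 < disc3 q) :
    ∃ x y z w : ℝ, x * w - y * z ≠ 0 ∧ Qcoeff x y z w = q := by
  obtain ⟨r₁, r₂, r₃, h12, h23, hb, hc, hd⟩ := cubic_roots (q 1 / q 0) (q 2 / q 0) (q 3 / q 0)
    (by
      have key : (q 1/q 0)^2*(q 2/q 0)^2 - 4*(q 2/q 0)^3 - 4*(q 1/q 0)^3*(q 3/q 0) +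
          18*(q 1/q 0)*(q 2/q 0)*(q 3/q 0) - 27*(q 3/q 0)^2 = disc3 q / q 0 ^ 4 := by
        rw [disc3]; field_simp
      rw [key]
      exact div_pos hq (by positivity))
  have hq1 : q 1 = -(q 0) * (r₁+r₂+r₃) := by
    field_simp at hb; linarith [hb]
  have hq2 : q 2 = q 0 * (r₁*r₂+r₁*r₃+r₂*r₃) := by
    field_simp at hc; linarith [hc]
  have hq3 : q 3 = -(q 0) * (r₁*r₂*r₃) := by
    field_simp at hd; linarith [hd]
  have hA : r₁ - r₃ ≠ 0 := sub_ne_zero.mpr (h12.trans h23).ne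
  have hB : r₂ - r₁ ≠ 0 := sub_ne_zero.mpr h12.ne'
  have hD : r₂ - r₃ ≠ 0 := sub_ne_zero.mpr h23.ne
  obtain ⟨l, hl0⟩ := cube_root_exists (3*q 0*(r₂-r₃)^2/(4*((r₁-r₃)*(r₂-r₁))))
  have hl : 4*l^3*((r₁-r₃)*(r₂-r₁)) = 3*q 0*(r₂-r₃)^2 := by
    rw [hl0]; field_simp
  have hlne : l ≠ 0 := by
    intro h0
    rw [h0] at hl
    have : q 0 * (r₂-r₃)^2 = 0 := by linarith [hl]
    exact (mul_ne_zero hq0 (pow_ne_zero 2 hD)) this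
  obtain ⟨t, ht2⟩ : ∃ t : ℝ, 3 * t^2 * (r₂-r₃)^2 = 1 := by
    refine ⟨Real.sqrt 3 / (3*(r₂ - r₃)), ?_⟩
    rw [div_pow, Real.sq_sqrt (by norm_num : (0:ℝ) ≤ 3)]
    field_simp
  have htne : t ≠ 0 := by
    intro h0
    rw [h0] at ht2
    norm_num at ht2
  have h3D : (3*(r₂-r₃)^2 : ℝ) ≠ 0 := by positivity
  have e0 : l^3/3 - l*(l*((r₂-r₁)-(r₁-r₃))*t)^2 = q 0 := by
    apply mul_right_cancel₀ h3D
    linear_combination hl - l^3*((r₂-r₁)-(r₁-r₃))^2*ht2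
  have e1 : l^2*(-l*r₁) - 2*l*(l*((r₂-r₁)-(r₁-r₃))*t)*(l*((r₁-r₃)*r₂-(r₂-r₁)*r₃)*t)
      - (-l*r₁)*(l*((r₂-r₁)-(r₁-r₃))*t)^2 = q 1 := by
    apply mul_right_cancel₀ h3D
    linear_combination (-2*l^3*((r₂-r₁)-(r₁-r₃))*((r₁-r₃)*r₂-(r₂-r₁)*r₃)
      + l^3*r₁*((r₂-r₁)-(r₁-r₃))^2)*ht2 - (r₁+r₂+r₃)*hl - 3*(r₂-r₃)^2*hq1
  have e2 : l*(-l*r₁)^2 - l*(l*((r₁-r₃)*r₂-(r₂-r₁)*r₃)*t)^2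
      - 2*(-l*r₁)*(l*((r₂-r₁)-(r₁-r₃))*t)*(l*((r₁-r₃)*r₂-(r₂-r₁)*r₃)*t) = q 2 := by
    apply mul_right_cancel₀ h3D
    linear_combination (-l^3*((r₁-r₃)*r₂-(r₂-r₁)*r₃)^2
      + 2*l^3*r₁*((r₂-r₁)-(r₁-r₃))*((r₁-r₃)*r₂-(r₂-r₁)*r₃))*ht2
      + (r₁*r₂+r₁*r₃+r₂*r₃)*hl - 3*(r₂-r₃)^2*hq2
  have e3 : (-l*r₁)^3/3 - (-l*r₁)*(l*((r₁-r₃)*r₂-(r₂-r₁)*r₃)*t)^2 = q 3 := by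
    apply mul_right_cancel₀ h3D
    linear_combination l^3*r₁*((r₁-r₃)*r₂-(r₂-r₁)*r₃)^2*ht2
      - (r₁*r₂*r₃)*hl - 3*(r₂-r₃)^2*hq3
  refine ⟨l, -l*r₁, l*((r₂-r₁)-(r₁-r₃))*t, l*((r₁-r₃)*r₂-(r₂-r₁)*r₃)*t, ?_, ?_⟩
  · have edet : l*(l*((r₁-r₃)*r₂-(r₂-r₁)*r₃)*t) - (-l*r₁)*(l*((r₂-r₁)-(r₁-r₃))*t)
        = 2*l^2*((r₁-r₃)*(r₂-r₁))*t := by ring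
    rw [edet]
    exact mul_ne_zero (mul_ne_zero (mul_ne_zero two_ne_zero (pow_ne_zero 2 hlne))
      (mul_ne_zero hA hB)) htne
  · funext i
    fin_cases i
    · exact e0
    · exact e1
    · exact e2
    · exact e3

theorem stmt16 (q : Fin 4 → ℝ) (hq : 0 < disc3 q) :
    ∃ x y z w : ℝ, x * w - y * z ≠ 0 ∧ Qcoeff x y z w = q := by
  obtain ⟨τ, hτ⟩ : ∃ τ : ℝ, q 0 + q 1*τ + q 2*τ^2 + q 3*τ^3 ≠ 0 := by
    by_contra hcon
    push_neg at hcon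
    have h0 := hcon 0
    have h1 := hcon 1
    have hm1 := hcon (-1)
    have h2 := hcon 2
    norm_num at h0 h1 hm1 h2
    have e0 : q 0 = 0 := h0
    have e2 : q 2 = 0 := by linarith
    have e3 : q 3 = 0 := by linarith
    have e1 : q 1 = 0 := by linarith
    rw [disc3, e0, e1, e2, e3] at hq
    norm_num at hq
  set q' : Fin 4 → ℝ := ![q 0 + q 1*τ + q 2*τ^2 + q 3*τ^3, q 1 + 2*q 2*τ + 3*q 3*τ^2,
    q 2 + 3*q 3*τ, q 3] with hq'def
  have hv0 : q' 0 = q 0 + q 1*τ + q 2*τ^2 + q 3*τ^3 := rfl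
  have hv1 : q' 1 = q 1 + 2*q 2*τ + 3*q 3*τ^2 := rfl
  have hv2 : q' 2 = q 2 + 3*q 3*τ := rfl
  have hv3 : q' 3 = q 3 := rfl
  have hq'0 : q' 0 ≠ 0 := by rw [hv0]; exact hτ
  have hdisc : 0 < disc3 q' := by
    have : disc3 q' = disc3 q := by
      rw [disc3, disc3, hv0, hv1, hv2, hv3]; ring
    rw [this]; exact hq
  obtain ⟨x, y, z, w, hdet, hQ⟩ := main_pos q' hq'0 hdisc
  have g0 : x^3/3 - x*z^2 = q' 0 := congrFun hQ 0
  have g1 : x^2*y - 2*x*z*w - y*z^2 = q' 1 := congrFun hQ 1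
  have g2 : x*y^2 - x*w^2 - 2*y*z*w = q' 2 := congrFun hQ 2
  have g3 : y^3/3 - y*w^2 = q' 3 := congrFun hQ 3
  rw [hv0] at g0
  rw [hv1] at g1
  rw [hv2] at g2
  rw [hv3] at g3
  refine ⟨x - τ*y, y, z - τ*w, w, ?_, ?_⟩
  · have e : (x - τ*y)*w - y*(z - τ*w) = x*w - y*z := by ring
    rw [e]; exact hdet
  · funext i
    fin_cases i
    · show (x - τ*y)^3/3 - (x - τ*y)*(z - τ*w)^2 = q 0
      linear_combination g0 - τ*g1 + τ^2*g2 - τ^3*g3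
    · show (x - τ*y)^2*y - 2*(x - τ*y)*(z - τ*w)*w - y*(z - τ*w)^2 = q 1
      linear_combination g1 - 2*τ*g2 + 3*τ^2*g3
    · show (x - τ*y)*y^2 - (x - τ*y)*w^2 - 2*y*(z - τ*w)*w = q 2
      linear_combination g2 - 3*τ*g3
    · show y^3/3 - y*w^2 = q 3
      exact g3
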